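/- arXiv:0808.3800 — 2 statements merged into one kernel-verified Lean document; each statement's English description precedes it below -/
import Mathlib

section
/- Let γ : [−1, 1] → ℂ be an injective continuous curve with γ(0) = 0, which is differentiable at 0 with γ'(0) ≠ 0. Let λ ∈ ℂ with |λ| > 1, and let I be a subset of the image of γ such that λ⁻¹·I ⊆ I and I contains at least one nonzero point. Then λ is real, and I is contained in the straight line {t·γ'(0) : t ∈ ℝ} through 0 in the tangent direction of γ at 0. -/
open Complex Set Filter Topology

private lemma aux_key_seq (γ : ℝ → ℂ) (hcont : ContinuousOn γ (Set.Icc (-1 : ℝ) 1))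
    (hinj : Set.InjOn γ (Set.Icc (-1 : ℝ) 1)) (hzero : γ 0 = 0)
    (v : ℂ) (hderiv : HasDerivAt γ v 0)
    (l : ℂ) (hl : 1 < ‖l‖)
    (I : Set ℂ) (hIγ : I ⊆ γ '' Set.Icc (-1 : ℝ) 1)
    (hinv : (fun z => l⁻¹ * z) '' I ⊆ I)
    (z : ℂ) (hzI : z ∈ I) (hz : z ≠ 0) :
    ∃ t : ℕ → ℝ, (∀ n, t n ∈ Set.Icc (-1:ℝ) 1 ∧ t n ≠ 0 ∧ γ (t n) = l⁻¹ ^ n * z) ∧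
      Tendsto (fun n => ((t n : ℂ))⁻¹ * (l⁻¹ ^ n * z)) atTop (𝓝 v) := by
  have hl0 : l ≠ 0 := by
    intro h
    simp [h] at hl; linarith
  have hzn : ∀ n, l⁻¹ ^ n * z ∈ I := by
    intro n
    induction n with
    | zero => simpa using hzI
    | succ n ih =>
      have : l⁻¹ ^ (n + 1) * z = l⁻¹ * (l⁻¹ ^ n * z) := by ring
      rw [this]
      exact hinv ⟨_, ih, rfl⟩
  have hzn0 : ∀ n, l⁻¹ ^ n * z ≠ 0 := fun n =>
    mul_ne_zero (pow_ne_zero _ (inv_ne_zero hl0)) hz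
  choose t htmem htγ using fun n => hIγ (hzn n)
  have htne : ∀ n, t n ≠ 0 := by
    intro n h
    exact hzn0 n (by rw [← htγ, h, hzero])
  have hzlim : Tendsto (fun n => l⁻¹ ^ n * z) atTop (𝓝 0) := by
    have h1 : ‖l⁻¹‖ < 1 := by
      rw [norm_inv]
      rw [inv_lt_one_iff₀]
      right; exact hl
    simpa using (tendsto_pow_atTop_nhds_zero_of_norm_lt_one h1).mul_const z
  have ht0 : Tendsto t atTop (𝓝 0) := by
    apply tendsto_of_subseq_tendsto
    intro ns hns
    obtain ⟨a, ha, φ, hφ, hφt⟩ :=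
      isCompact_Icc.tendsto_subseq (x := fun n => t (ns n)) (fun n => htmem (ns n))
    have h1 : Tendsto (fun n => t (ns (φ n))) atTop (𝓝[Set.Icc (-1:ℝ) 1] a) :=
      tendsto_nhdsWithin_of_tendsto_nhds_of_eventually_within _ hφt
        (Eventually.of_forall fun n => htmem _)
    have h2 : Tendsto (fun n => γ (t (ns (φ n)))) atTop (𝓝 (γ a)) :=
      (hcont a ha).tendsto.comp h1
    have h3 : Tendsto (fun n => γ (t (ns (φ n)))) atTop (𝓝 0) := by
      have : Tendsto (fun n => ns (φ n)) atTop atTop := hns.comp hφ.tendsto_atTop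
      simpa [Function.comp_def, htγ] using hzlim.comp this
    have ha0 : a = 0 := by
      apply hinj ha (by constructor <;> norm_num)
      rw [hzero]
      exact tendsto_nhds_unique h2 h3
    exact ⟨φ, by rwa [ha0] at hφt⟩
  refine ⟨t, fun n => ⟨htmem n, htne n, htγ n⟩, ?_⟩
  have htne0 : Tendsto t atTop (𝓝[≠] (0:ℝ)) :=
    tendsto_nhdsWithin_of_tendsto_nhds_of_eventually_within _ ht0
      (Eventually.of_forall htne)
  have hslope := (hasDerivAt_iff_tendsto_slope.mp hderiv).comp htne0
  have heq : ∀ n, slope γ 0 (t n) = ((t n : ℂ))⁻¹ * (l⁻¹ ^ n * z) := by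
    intro n
    rw [slope_def_module, ← htγ n, hzero, sub_zero, sub_zero]
    rw [← Complex.ofReal_inv, Complex.real_smul]
  exact hslope.congr heq
open Complex Set Filter Topology

/-- Let `γ : [−1, 1] → ℂ` be an injective continuous curve with `γ 0 = 0`, differentiable at
`0` with `γ'(0) = v ≠ 0`.  Let `|λ| > 1` and let `I` be a subset of the image of `γ` with
`λ⁻¹ · I ⊆ I` containing a nonzero point.  Then `λ` is real and `I` is contained in the
straight line `{t·v : t ∈ ℝ}` through `0` in the tangent direction of `γ` at `0`. -/
theorem invariant_subset_of_smooth_curve_in_line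
    (γ : ℝ → ℂ) (hcont : ContinuousOn γ (Set.Icc (-1 : ℝ) 1))
    (hinj : Set.InjOn γ (Set.Icc (-1 : ℝ) 1))
    (hzero : γ 0 = 0)
    (v : ℂ) (hderiv : HasDerivAt γ v 0) (hv : v ≠ 0)
    (l : ℂ) (hl : 1 < ‖l‖)
    (I : Set ℂ) (hIγ : I ⊆ γ '' Set.Icc (-1 : ℝ) 1)
    (hinv : (fun z => l⁻¹ * z) '' I ⊆ I)
    (hne : ∃ z ∈ I, z ≠ 0) :
    l.im = 0 ∧ I ⊆ {z : ℂ | ∃ t : ℝ, z = t * v} := by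
  have hl0 : l ≠ 0 := by
    intro h; simp [h] at hl; linarith
  have him : l.im = 0 := by
    obtain ⟨z, hzI, hz⟩ := hne
    obtain ⟨t, ht, hr⟩ := aux_key_seq γ hcont hinj hzero v hderiv l hl I hIγ hinv z hzI hz
    set r : ℕ → ℂ := fun n => ((t n : ℂ))⁻¹ * (l⁻¹ ^ n * z) with hrdef
    have hr1 : Filter.Tendsto (fun n => r (n + 1)) Filter.atTop (𝓝 v) :=
      hr.comp (Filter.tendsto_add_atTop_nat 1)
    have hratio : Filter.Tendsto (fun n => l⁻¹ * r n / r (n + 1)) Filter.atTop (𝓝 l⁻¹) := by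
      have h := ((Filter.Tendsto.mul (tendsto_const_nhds (x := l⁻¹)) hr).div hr1 hv)
      rw [mul_div_assoc, div_self hv, mul_one] at h
      exact h.congr fun n => rfl
    have heq : ∀ n, l⁻¹ * r n / r (n + 1) = ((t (n + 1) / t n : ℝ) : ℂ) := by
      intro n
      have h1 : (t n : ℂ) ≠ 0 := Complex.ofReal_ne_zero.mpr (ht n).2.1
      have h2 : (t (n + 1) : ℂ) ≠ 0 := Complex.ofReal_ne_zero.mpr (ht (n + 1)).2.1
      rw [hrdef]
      push_cast
      rw [inv_pow]
      have h3 : (l : ℂ) ^ n ≠ 0 := pow_ne_zero _ hl0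
      field_simp
      rw [one_div, inv_pow, ← pow_succ']
      exact (mul_inv_cancel₀ (pow_ne_zero _ hl0)).symm
    have him' : (l⁻¹).im = 0 := by
      have h1 : Filter.Tendsto (fun n => (l⁻¹ * r n / r (n + 1)).im) Filter.atTop
          (𝓝 (l⁻¹).im) := (Complex.continuous_im.tendsto _).comp hratio
      have h2 : (fun n => (l⁻¹ * r n / r (n + 1)).im) = fun _ => (0 : ℝ) := by
        funext n; rw [heq n, Complex.ofReal_im]
      rw [h2] at h1
      exact (tendsto_nhds_unique tendsto_const_nhds h1).symm
    have := Complex.inv_im l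
    rw [him'] at this
    have hsq : Complex.normSq l ≠ 0 := by simpa using Complex.normSq_pos.mpr hl0
    field_simp at this
    linarith [this]
  refine ⟨him, fun z hzI => ?_⟩
  by_cases hz : z = 0
  · exact ⟨0, by simp [hz]⟩
  obtain ⟨t, ht, hr⟩ := aux_key_seq γ hcont hinj hzero v hderiv l hl I hIγ hinv z hzI hz
  have hdiv : Filter.Tendsto (fun n => z / (((t n : ℂ))⁻¹ * (l⁻¹ ^ n * z)))
      Filter.atTop (𝓝 (z / v)) := Filter.Tendsto.div tendsto_const_nhds hr hv
  have hre : l = ((l.re : ℝ) : ℂ) := by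
    apply Complex.ext <;> simp [him]
  have heq : ∀ n, z / (((t n : ℂ))⁻¹ * (l⁻¹ ^ n * z)) = (((l.re ^ n * t n : ℝ)) : ℂ) := by
    intro n
    have h1 : (t n : ℂ) ≠ 0 := Complex.ofReal_ne_zero.mpr (ht n).2.1
    push_cast
    rw [← hre, inv_pow]
    have h3 : (l : ℂ) ^ n ≠ 0 := pow_ne_zero _ hl0
    field_simp
  have himzv : (z / v).im = 0 := by
    have h1 : Filter.Tendsto (fun n => (z / (((t n : ℂ))⁻¹ * (l⁻¹ ^ n * z))).im)
        Filter.atTop (𝓝 (z / v).im) := (Complex.continuous_im.tendsto _).comp hdiv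
    have h2 : (fun n => (z / (((t n : ℂ))⁻¹ * (l⁻¹ ^ n * z))).im) = fun _ => (0 : ℝ) := by
      funext n; rw [heq n, Complex.ofReal_im]
    rw [h2] at h1
    exact (tendsto_nhds_unique tendsto_const_nhds h1).symm
  refine ⟨(z / v).re, ?_⟩
  have : z / v = (((z / v).re : ℝ) : ℂ) := by
    apply Complex.ext <;> simp [himzv]
  calc z = (z / v) * v := by field_simp
  _ = ((z / v).re : ℂ) * v := by rw [← this]
end

section
/- Let f be a nonconstant rational function (a quotient of two coprime polynomials over ℂ, viewed as a meromorphic function on ℂ) and let a and b be two distinct points of the Riemann sphere such that the full preimage f⁻¹({a, b}) is contained in the real line, where the preimage of ∞ means the set of poles of f. Then f maps the real line (minus the poles of f) into a circle on the Riemann sphere, i.e., into a Euclidean circle or a straight line in ℂ. -/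
open Complex Polynomial

noncomputable section

/-- A circle on the Riemann sphere, viewed in `ℂ`: a Euclidean circle or a straight line. -/
def IsCircleOrLine (S : Set ℂ) : Prop :=
  (∃ (c : ℂ) (r : ℝ), 0 < r ∧ S = Metric.sphere c r) ∨
  (∃ a v : ℂ, v ≠ 0 ∧ S = {z : ℂ | ∃ t : ℝ, z = a + t * v})

/-- The preimage of a point of the Riemann sphere under the rational function `P/Q`:
the preimage of a finite point `w` is the zero set of `P − w·Q`, and the preimage of `∞`
is the zero set of `Q`. -/
def ratSpherePreimage (P Q : Polynomial ℂ) (a : OnePoint ℂ) : Set ℂ :=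
  {z : ℂ | (a = OnePoint.infty ∧ Q.eval z = 0) ∨
    (∃ w : ℂ, a = (w : OnePoint ℂ) ∧ P.eval z - w * Q.eval z = 0)}

/-- The real line inside `ℂ`. -/
def realLine : Set ℂ := {z : ℂ | z.im = 0}

end

lemma real_of_im_zero {z : ℂ} (h : z.im = 0) : ∃ t : ℝ, z = (t : ℂ) :=
  ⟨z.re, by apply Complex.ext <;> simp [h]⟩

lemma eval_real_of_roots_real (A : Polynomial ℂ) (h : ∀ z : ℂ, A.eval z = 0 → z.im = 0)
    (x : ℝ) : ∃ t : ℝ, A.eval (x : ℂ) = A.leadingCoeff * (t : ℂ) := by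
  have hs : A.Splits := IsAlgClosed.splits A
  have hfact := Polynomial.Splits.eq_prod_roots hs
  have heval : A.eval (x : ℂ) = A.leadingCoeff * ((A.roots.map fun a => (x : ℂ) - a).prod) := by
    conv_lhs => rw [hfact]
    simp [Polynomial.eval_multiset_prod, Multiset.map_map, Function.comp]
  have hmem : ((A.roots.map fun a => (x : ℂ) - a).prod) ∈ Complex.ofRealHom.range := by
    apply Subring.multiset_prod_mem
    intro y hy
    simp only [Multiset.mem_map] at hy
    obtain ⟨r, hr, rfl⟩ := hy
    have hr0 : A.eval r = 0 := Polynomial.isRoot_of_mem_roots hr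
    obtain ⟨t, ht⟩ := real_of_im_zero (h r hr0)
    exact ⟨x - t, by simp [ht]⟩
  obtain ⟨t, ht⟩ := hmem
  exact ⟨t, by rw [heval, ← ht]; rfl⟩

lemma not_const_aux (P Q : Polynomial ℂ)
    (hnc : ¬ ∃ c : ℂ, ∀ z : ℂ, Q.eval z ≠ 0 → P.eval z / Q.eval z = c)
    (c : ℂ) : P - Polynomial.C c * Q ≠ 0 := by
  intro h
  apply hnc
  refine ⟨c, fun z hz => ?_⟩
  have hP : P = Polynomial.C c * Q := by linear_combination h
  rw [hP]
  simp only [Polynomial.eval_mul, Polynomial.eval_C]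
  field_simp

lemma exists_ne_value (P Q : Polynomial ℂ) (hQ : Q ≠ 0)
    (hnc : ¬ ∃ c : ℂ, ∀ z : ℂ, Q.eval z ≠ 0 → P.eval z / Q.eval z = c)
    (c : ℂ) : ∃ x : ℝ, Q.eval (x : ℂ) ≠ 0 ∧ P.eval (x : ℂ) / Q.eval (x : ℂ) ≠ c := by
  by_contra h
  push_neg at h
  have hzero : P - Polynomial.C c * Q = 0 := by
    apply Polynomial.eq_zero_of_infinite_isRoot
    have hfin : Set.Finite {x : ℝ | Q.eval (x : ℂ) = 0} := by
      have : {x : ℝ | Q.eval (x : ℂ) = 0} = (fun x : ℝ => (x : ℂ)) ⁻¹' {z : ℂ | Q.IsRoot z} := rfl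
      rw [this]
      exact Set.Finite.preimage (Function.Injective.injOn Complex.ofReal_injective)
        (Polynomial.finite_setOf_isRoot hQ)
    have hinf : Set.Infinite {x : ℝ | Q.eval (x : ℂ) ≠ 0} := by
      have := hfin.infinite_compl
      simpa [Set.compl_setOf] using this
    have himg : Set.InjOn (fun x : ℝ => (x : ℂ)) {x : ℝ | Q.eval (x : ℂ) ≠ 0} :=
      Function.Injective.injOn Complex.ofReal_injective
    apply Set.Infinite.mono (s := (fun x : ℝ => (x : ℂ)) '' {x : ℝ | Q.eval (x : ℂ) ≠ 0})
    · rintro z ⟨x, hx, rfl⟩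
      have hx' := h x hx
      have : P.eval (x : ℂ) = c * Q.eval (x : ℂ) := by
        rw [div_eq_iff hx] at hx'
        linear_combination hx'
      simp [Polynomial.IsRoot, this]
    · exact Set.Infinite.image himg hinf
  exact not_const_aux P Q hnc c hzero

lemma circle_key (f g w₁ w₂ w₁' w₂' d d' z z' σ ρ : ℂ) (he : d - d' ≠ 0)
    (h1 : (f - w₁) * (g - w₂') = d * ρ)
    (h2 : (g - w₁') * (f - w₂) = d' * ρ)
    (hz : z * (d - d') = w₂ * d - w₁ * d')
    (hz' : z' * (d - d') = w₁' * d - w₂' * d')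
    (hσ : σ * (d - d') = z * z' * (d - d') - (d * w₁' * w₂ - d' * w₁ * w₂')) :
    (f - z) * (g - z') = σ := by
  have hstar : d' * ((f - w₁) * (g - w₂')) = d * ((g - w₁') * (f - w₂)) := by
    rw [h1, h2]; ring
  have h0 : (d - d') * ((f - z) * (g - z') - σ) = 0 := by
    linear_combination (-g) * hz + (-f) * hz' - hσ - hstar
  rcases mul_eq_zero.mp h0 with h | h
  · exact absurd h he
  · exact sub_eq_zero.mp h

lemma aux_infty (P Q : Polynomial ℂ) (hQ : Q ≠ 0)
    (hnc : ¬ ∃ c : ℂ, ∀ z : ℂ, Q.eval z ≠ 0 → P.eval z / Q.eval z = c) (w : ℂ)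
    (hQr : ∀ z : ℂ, Q.eval z = 0 → z.im = 0)
    (hBr : ∀ z : ℂ, P.eval z - w * Q.eval z = 0 → z.im = 0) :
    ∃ S : Set ℂ, IsCircleOrLine S ∧
      ∀ x : ℝ, Q.eval (x : ℂ) ≠ 0 → P.eval (x : ℂ) / Q.eval (x : ℂ) ∈ S := by
  set B := P - Polynomial.C w * Q with hBdef
  have hB : B ≠ 0 := not_const_aux P Q hnc w
  have hBr' : ∀ z : ℂ, B.eval z = 0 → z.im = 0 := by
    intro z hz
    apply hBr
    simpa [hBdef] using hz
  set β := B.leadingCoeff with hβdef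
  set γ := Q.leadingCoeff with hγdef
  have hβ : β ≠ 0 := Polynomial.leadingCoeff_ne_zero.mpr hB
  have hγ : γ ≠ 0 := Polynomial.leadingCoeff_ne_zero.mpr hQ
  refine ⟨{z : ℂ | ∃ t : ℝ, z = w + t * (β / γ)},
    Or.inr ⟨w, β / γ, div_ne_zero hβ hγ, rfl⟩, ?_⟩
  intro x hx
  obtain ⟨s, hs⟩ := eval_real_of_roots_real B hBr' x
  obtain ⟨u, hu⟩ := eval_real_of_roots_real Q hQr x
  have hu0 : (u : ℂ) ≠ 0 := by
    intro h
    exact hx (by rw [hu, h, mul_zero])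
  refine ⟨s / u, ?_⟩
  have hPx : P.eval (x : ℂ) = B.eval (x : ℂ) + w * Q.eval (x : ℂ) := by
    rw [hBdef]
    simp only [Polynomial.eval_sub, Polynomial.eval_mul, Polynomial.eval_C]
    ring
  rw [hPx, hs, hu, ← hβdef, ← hγdef]
  push_cast
  field_simp
  ring

lemma aux_two (P Q : Polynomial ℂ) (hQ : Q ≠ 0)
    (hnc : ¬ ∃ c : ℂ, ∀ z : ℂ, Q.eval z ≠ 0 → P.eval z / Q.eval z = c)
    (w₁ w₂ : ℂ) (hw : w₁ ≠ w₂)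
    (hAr : ∀ z : ℂ, P.eval z - w₁ * Q.eval z = 0 → z.im = 0)
    (hBr : ∀ z : ℂ, P.eval z - w₂ * Q.eval z = 0 → z.im = 0) :
    ∃ S : Set ℂ, IsCircleOrLine S ∧
      ∀ x : ℝ, Q.eval (x : ℂ) ≠ 0 → P.eval (x : ℂ) / Q.eval (x : ℂ) ∈ S := by
  set A := P - Polynomial.C w₁ * Q with hAdef
  set B := P - Polynomial.C w₂ * Q with hBdef
  have hA : A ≠ 0 := not_const_aux P Q hnc w₁
  have hB : B ≠ 0 := not_const_aux P Q hnc w₂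
  have hAr' : ∀ z : ℂ, A.eval z = 0 → z.im = 0 := by
    intro z hz; apply hAr; simpa [hAdef] using hz
  have hBr' : ∀ z : ℂ, B.eval z = 0 → z.im = 0 := by
    intro z hz; apply hBr; simpa [hBdef] using hz
  set α := A.leadingCoeff with hαdef
  set β := B.leadingCoeff with hβdef
  have hα : α ≠ 0 := Polynomial.leadingCoeff_ne_zero.mpr hA
  have hβ : β ≠ 0 := Polynomial.leadingCoeff_ne_zero.mpr hB
  set d := α * (starRingEnd ℂ) β with hddef
  have hAe : ∀ x : ℝ, A.eval (x:ℂ) = P.eval (x:ℂ) - w₁ * Q.eval (x:ℂ) := by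
    intro x; simp [hAdef]
  have hBe : ∀ x : ℝ, B.eval (x:ℂ) = P.eval (x:ℂ) - w₂ * Q.eval (x:ℂ) := by
    intro x; simp [hBdef]
  by_cases hdi : d.im = 0
  · -- line case
    refine ⟨{z : ℂ | ∃ t : ℝ, z = w₁ + t * (w₂ - w₁)},
      Or.inr ⟨w₁, w₂ - w₁, sub_ne_zero.mpr (Ne.symm hw), rfl⟩, ?_⟩
    intro x hx
    obtain ⟨s, hs⟩ := eval_real_of_roots_real A hAr' x
    obtain ⟨u, hu⟩ := eval_real_of_roots_real B hBr' x
    rw [← hαdef] at hs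
    rw [← hβdef] at hu
    -- α = cr * β with cr real
    have hd_real : d = ((d.re : ℝ) : ℂ) := by
      apply Complex.ext <;> simp [hdi]
    set cr : ℝ := d.re / Complex.normSq β with hcrdef
    have hnsβ : ((Complex.normSq β : ℝ) : ℂ) ≠ 0 := by
      simpa using hβ
    have hαβ : α = (cr : ℂ) * β := by
      have h2 : α * ((Complex.normSq β : ℝ) : ℂ) = (d.re : ℂ) * β := by
        rw [← Complex.mul_conj β]
        calc α * (β * (starRingEnd ℂ) β) = d * β := by rw [hddef]; ring
          _ = (d.re : ℂ) * β := by rw [← hd_real]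
      rw [hcrdef]
      push_cast
      field_simp
      linear_combination h2
    have e1 : P.eval (x:ℂ) - w₁ * Q.eval (x:ℂ) = (cr : ℂ) * β * (s : ℂ) := by
      rw [← hAe x, hs, hαβ]
    have e2 : P.eval (x:ℂ) - w₂ * Q.eval (x:ℂ) = β * (u : ℂ) := by
      rw [← hBe x, hu]
    have hDne : (cr * s - u : ℝ) ≠ 0 := by
      intro h
      have hQx : (w₂ - w₁) * Q.eval (x:ℂ) = β * ((cr * s - u : ℝ) : ℂ) := by
        push_cast
        linear_combination e1 - e2
      rw [h] at hQx
      simp only [Complex.ofReal_zero, mul_zero] at hQx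
      rcases mul_eq_zero.mp hQx with h' | h'
      · exact hw (by linear_combination -h')
      · exact hx h'
    set t : ℝ := cr * s / (cr * s - u) with htdef
    have htD : t * (cr * s - u) = cr * s := by
      rw [htdef]; field_simp
    have htDc : (t : ℂ) * ((cr : ℂ) * (s : ℂ) - (u : ℂ)) = (cr : ℂ) * (s : ℂ) := by
      exact_mod_cast congrArg (fun r : ℝ => (r : ℂ)) htD
    refine ⟨t, ?_⟩
    rw [div_eq_iff hx]
    linear_combination (1 - (t:ℂ)) * e1 + (t:ℂ) * e2 - β * htDc
  · -- circle case
    have he : d - (starRingEnd ℂ) d ≠ 0 := by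
      intro h
      have : (starRingEnd ℂ) d = d := by linear_combination -h
      exact hdi ((Complex.conj_eq_iff_im).mp this)
    set e : ℂ := d - (starRingEnd ℂ) d with hedef
    set z₀ : ℂ := (w₂ * d - w₁ * (starRingEnd ℂ) d) / e with hz₀def
    set σc : ℂ := z₀ * (starRingEnd ℂ) z₀ -
      (d * (starRingEnd ℂ) w₁ * w₂ - (starRingEnd ℂ) d * w₁ * (starRingEnd ℂ) w₂) / e
      with hσcdef
    have hz : z₀ * e = w₂ * d - w₁ * (starRingEnd ℂ) d := div_mul_cancel₀ _ he
    have hz' : (starRingEnd ℂ) z₀ * e =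
        (starRingEnd ℂ) w₁ * d - (starRingEnd ℂ) w₂ * (starRingEnd ℂ) d := by
      have hc := congrArg (starRingEnd ℂ) hz
      simp only [map_mul, map_sub, Complex.conj_conj] at hc
      have hce : (starRingEnd ℂ) e = -e := by
        rw [hedef]; simp only [map_sub, Complex.conj_conj]; ring
      rw [hce] at hc
      linear_combination -hc
    have hσ : σc * e = z₀ * (starRingEnd ℂ) z₀ * e -
        (d * (starRingEnd ℂ) w₁ * w₂ - (starRingEnd ℂ) d * w₁ * (starRingEnd ℂ) w₂) := by
      rw [hσcdef, sub_mul, div_mul_cancel₀ _ he]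
    have claim : ∀ x : ℝ, Q.eval (x:ℂ) ≠ 0 →
        (P.eval (x:ℂ) / Q.eval (x:ℂ) - z₀) *
          (starRingEnd ℂ) (P.eval (x:ℂ) / Q.eval (x:ℂ) - z₀) = σc := by
      intro x hx
      obtain ⟨s, hs⟩ := eval_real_of_roots_real A hAr' x
      obtain ⟨u, hu⟩ := eval_real_of_roots_real B hBr' x
      rw [← hαdef] at hs
      rw [← hβdef] at hu
      set p : ℂ := P.eval (x:ℂ) with hpdef
      set q : ℂ := Q.eval (x:ℂ) with hqdef
      set ρ : ℝ := s * u / Complex.normSq q with hρdef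
      have hQc : (starRingEnd ℂ) q ≠ 0 := by simpa using hx
      have a1 : p - w₁ * q = α * (s : ℂ) := by rw [← hAe x, hs]
      have b1 : p - w₂ * q = β * (u : ℂ) := by rw [← hBe x, hu]
      have b1' : (starRingEnd ℂ) p - (starRingEnd ℂ) w₂ * (starRingEnd ℂ) q =
          (starRingEnd ℂ) β * (u : ℂ) := by
        have hc := congrArg (starRingEnd ℂ) b1
        simp only [map_mul, map_sub, Complex.conj_ofReal] at hc
        exact hc
      have hkey : (p / q - w₁) * ((starRingEnd ℂ) (p / q) - (starRingEnd ℂ) w₂) *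
          (q * (starRingEnd ℂ) q) = (α * (s : ℂ)) * ((starRingEnd ℂ) β * (u : ℂ)) := by
        have t1 : (p / q - w₁) * q = α * (s : ℂ) := by
          rw [sub_mul, div_mul_cancel₀ _ hx]
          linear_combination a1
        have t2 : ((starRingEnd ℂ) (p / q) - (starRingEnd ℂ) w₂) * (starRingEnd ℂ) q =
            (starRingEnd ℂ) β * (u : ℂ) := by
          rw [map_div₀, sub_mul, div_mul_cancel₀ _ hQc]
          linear_combination b1'
        calc (p / q - w₁) * ((starRingEnd ℂ) (p / q) - (starRingEnd ℂ) w₂) *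
            (q * (starRingEnd ℂ) q)
            = ((p / q - w₁) * q) *
              (((starRingEnd ℂ) (p / q) - (starRingEnd ℂ) w₂) * (starRingEnd ℂ) q) := by ring
          _ = (α * (s : ℂ)) * ((starRingEnd ℂ) β * (u : ℂ)) := by rw [t1, t2]
      have hnsq : ((Complex.normSq q : ℝ) : ℂ) = q * (starRingEnd ℂ) q :=
        (Complex.mul_conj q).symm
      have hqq : q * (starRingEnd ℂ) q ≠ 0 := mul_ne_zero hx hQc
      have hE1 : (p / q - w₁) * ((starRingEnd ℂ) (p / q) - (starRingEnd ℂ) w₂) =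
          d * (ρ : ℂ) := by
        rw [hρdef, hddef]
        push_cast
        rw [hnsq]
        rw [mul_div_assoc', eq_div_iff hqq]
        linear_combination hkey
      have hE2 : ((starRingEnd ℂ) (p / q) - (starRingEnd ℂ) w₁) * (p / q - w₂) =
          (starRingEnd ℂ) d * (ρ : ℂ) := by
        have hc := congrArg (starRingEnd ℂ) hE1
        simp only [map_mul, map_sub, Complex.conj_conj, Complex.conj_ofReal] at hc
        linear_combination hc
      have := circle_key (p / q) ((starRingEnd ℂ) (p / q)) w₁ w₂ ((starRingEnd ℂ) w₁)
        ((starRingEnd ℂ) w₂) d ((starRingEnd ℂ) d) z₀ ((starRingEnd ℂ) z₀) σc (ρ : ℂ)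
        he hE1 hE2 hz hz' hσ
      calc (p / q - z₀) * (starRingEnd ℂ) (p / q - z₀)
          = (p / q - z₀) * ((starRingEnd ℂ) (p / q) - (starRingEnd ℂ) z₀) := by rw [map_sub]
        _ = σc := this
    obtain ⟨x₀, hx₀, hne₀⟩ := exists_ne_value P Q hQ hnc z₀
    set r : ℝ := Real.sqrt (Complex.normSq (P.eval (x₀:ℂ) / Q.eval (x₀:ℂ) - z₀)) with hrdef
    have hrpos : 0 < r := by
      apply Real.sqrt_pos.mpr
      exact Complex.normSq_pos.mpr (sub_ne_zero.mpr hne₀)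
    refine ⟨Metric.sphere z₀ r, Or.inl ⟨z₀, r, hrpos, rfl⟩, ?_⟩
    intro x hx
    have h1 := claim x hx
    have h2 := claim x₀ hx₀
    rw [Complex.mul_conj] at h1 h2
    have hns : Complex.normSq (P.eval (x:ℂ) / Q.eval (x:ℂ) - z₀) =
        Complex.normSq (P.eval (x₀:ℂ) / Q.eval (x₀:ℂ) - z₀) := by
      have := h1.trans h2.symm
      exact_mod_cast this
    rw [Metric.mem_sphere, Complex.dist_eq, Complex.norm_def, hns, hrdef]

/-- If the full preimage of two distinct points of the Riemann sphere under a nonconstant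
rational function `P/Q` lies on the real line, then `P/Q` maps the real line (minus the
poles, i.e. the zeros of `Q`) into a Euclidean circle or straight line in `ℂ`. -/
theorem rational_two_real_preimages
    (P Q : Polynomial ℂ) (hQ : Q ≠ 0) (hcop : IsCoprime P Q)
    (hnc : ¬ ∃ c : ℂ, ∀ z : ℂ, Q.eval z ≠ 0 → P.eval z / Q.eval z = c)
    (a b : OnePoint ℂ) (hab : a ≠ b)
    (hpre : ratSpherePreimage P Q a ∪ ratSpherePreimage P Q b ⊆ realLine) :
    ∃ S : Set ℂ, IsCircleOrLine S ∧
      ∀ x : ℝ, Q.eval (x : ℂ) ≠ 0 → P.eval (x : ℂ) / Q.eval (x : ℂ) ∈ S := by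
  have hQr_of : ∀ c : OnePoint ℂ, c = OnePoint.infty →
      (ratSpherePreimage P Q c ⊆ realLine) → ∀ z : ℂ, Q.eval z = 0 → z.im = 0 := by
    rintro c rfl hsub z hz
    exact hsub (Or.inl ⟨rfl, hz⟩)
  have hW_of : ∀ (w : ℂ) (c : OnePoint ℂ), c = (w : OnePoint ℂ) →
      (ratSpherePreimage P Q c ⊆ realLine) →
      ∀ z : ℂ, P.eval z - w * Q.eval z = 0 → z.im = 0 := by
    rintro w c rfl hsub z hz
    exact hsub (Or.inr ⟨w, rfl, hz⟩)
  have hsub1 : ratSpherePreimage P Q a ⊆ realLine :=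
    fun z hz => hpre (Or.inl hz)
  have hsub2 : ratSpherePreimage P Q b ⊆ realLine :=
    fun z hz => hpre (Or.inr hz)
  cases a with
  | infty =>
    cases b with
    | infty => exact absurd rfl hab
    | coe w =>
      exact aux_infty P Q hQ hnc w (hQr_of _ rfl hsub1) (hW_of w _ rfl hsub2)
  | coe w₁ =>
    cases b with
    | infty =>
      exact aux_infty P Q hQ hnc w₁ (hQr_of _ rfl hsub2) (hW_of w₁ _ rfl hsub1)
    | coe w₂ =>
      have hw : w₁ ≠ w₂ := fun h => hab (by rw [h])
      exact aux_two P Q hQ hnc w₁ w₂ hw (hW_of w₁ _ rfl hsub1) (hW_of w₂ _ rfl hsub2)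
end
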